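/- Let e₁ⁿ and e₂ⁿ be sequences of oriented segments in ℝ² converging (endpoint-wise) to segments e₁ and e₂ respectively, such that for every n the segments e₁ⁿ and e₂ⁿ do not intersect at a point lying in the relative interior of both. If e₁ and e₂ do not overlap over a segment of positive length, then Ord(e₁ⁿ, e₂ⁿ) converges to Ord(e₁, e₂); if e₁ and e₂ overlap over a segment of length d > 0, then every accumulation point of the real sequence Ord(e₁ⁿ, e₂ⁿ) lies in {d, −d}. -/

import Mathlib

open MeasureTheory Filter Topology Set

noncomputable section
open scoped Classical

abbrev Pt : Type := EuclideanSpace ℝ (Fin 2)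

/-- The point with coordinates `(a, b)` in the plane. -/
def pt (a b : ℝ) : Pt := WithLp.toLp 2 ![a, b]

/-- `d₊(e₁,e₂)` where `e₁` is the oriented segment from `p` to `q` and `e₂` the segment
from `r` to `s`: the Lebesgue measure of the set of `x ∈ [0, ‖q-p‖]` such that some point
of `e₂` has coordinates `(x, y)` with `y ≥ 0` in the frame centered at `p` with the
`x`-axis directed along `e₁`. It is `0` if `e₁` is degenerate. -/
def dplus (p q r s : Pt) : ℝ :=
  if p = q then 0 else
    (volume {x : ℝ | x ∈ Set.Icc (0 : ℝ) (dist p q) ∧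
        ∃ y : ℝ, 0 ≤ y ∧
          p + x • (‖q - p‖⁻¹ • (q - p)) +
              y • pt (-(‖q - p‖⁻¹ • (q - p)) 1) ((‖q - p‖⁻¹ • (q - p)) 0)
            ∈ segment ℝ r s}).toReal

/-- As `dplus`, but for points below the axis (`y ≤ 0`). -/
def dminus (p q r s : Pt) : ℝ :=
  if p = q then 0 else
    (volume {x : ℝ | x ∈ Set.Icc (0 : ℝ) (dist p q) ∧
        ∃ y : ℝ, y ≤ 0 ∧
          p + x • (‖q - p‖⁻¹ • (q - p)) +
              y • pt (-(‖q - p‖⁻¹ • (q - p)) 1) ((‖q - p‖⁻¹ • (q - p)) 0)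
            ∈ segment ℝ r s}).toReal

/-- The order function `Ord(e₁,e₂) = d₊(e₁,e₂) − d₋(e₁,e₂)`. -/
def ordFn (p q r s : Pt) : ℝ := dplus p q r s - dminus p q r s

/-- Two subsets of the plane overlap over a segment of length `d` if their intersection is
a segment of length `d`. -/
def OverlapLen (s t : Set Pt) (d : ℝ) : Prop :=
  ∃ u v : Pt, s ∩ t = segment ℝ u v ∧ dist u v = d

namespace OrdAux
/-- length of `Icc 0 l ∩ [min c d, max c d]` -/
def len (l c d : ℝ) : ℝ := max 0 (min l (max c d) - max 0 (min c d))

/-- Closed form for `dplus` in frame coordinates. -/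
def D (l a b α β : ℝ) : ℝ :=
  if α < 0 ∧ β < 0 then 0 else
    len l (a + (if 0 ≤ α then 0 else α / (α - β)) * (b - a))
          (a + (if 0 ≤ β then 1 else α / (α - β)) * (b - a))

lemma len_nonneg (l c d : ℝ) : 0 ≤ len l c d := le_max_left _ _

lemma len_self (l c : ℝ) : len l c c = 0 := by
  have h : min l (max c c) - max 0 (min c c) ≤ 0 := by
    simp only [max_self, min_self]
    rcases le_total c 0 with h | h
    · have : min l c ≤ c := min_le_right _ _
      have : max 0 c = 0 := max_eq_left h
      nlinarith [min_le_right l c]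
    · have : max 0 c = c := max_eq_right h
      nlinarith [min_le_right l c]
  simpa [len] using max_eq_left h

lemma len_comm (l c d : ℝ) : len l c d = len l d c := by
  simp [len, max_comm c d, min_comm c d]

lemma vol_len (l c d : ℝ) :
    (volume (Icc 0 l ∩ Icc (min c d) (max c d))).toReal = len l c d := by
  rw [Icc_inter_Icc, Real.volume_Icc, ENNReal.toReal_ofReal']
  simp [len, max_comm]

lemma img_aff {a m c d : ℝ} (h : c ≤ d) (hm : 0 ≤ m) :
    (fun t => a + t * m) '' Icc c d = Icc (a + c * m) (a + d * m) := by
  ext x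
  simp only [mem_image, mem_Icc]
  constructor
  · rintro ⟨t, ⟨h1, h2⟩, rfl⟩
    constructor <;> nlinarith
  · rintro ⟨h1, h2⟩
    rcases eq_or_lt_of_le hm with hm0 | hm0
    · exact ⟨c, ⟨le_refl _, h⟩, by nlinarith⟩
    · refine ⟨(x - a) / m, ⟨?_, ?_⟩, by field_simp; ring⟩
      · rw [le_div_iff₀ hm0]; linarith
      · rw [div_le_iff₀ hm0]; linarith

lemma img_aff' (a m : ℝ) {c d : ℝ} (h : c ≤ d) :
    (fun t => a + t * m) '' Icc c d
      = Icc (min (a + c * m) (a + d * m)) (max (a + c * m) (a + d * m)) := by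
  rcases le_total 0 m with hm | hm
  · rw [img_aff h hm, min_eq_left (by nlinarith), max_eq_right (by nlinarith)]
  · have h2 : (fun t => a + t * m) '' Icc c d
        = ((fun t => (a + (c + d) * m) + t * (-m)) ∘ (fun t => c + d - t)) '' Icc c d := by
      apply image_congr
      intro t _
      simp only [Function.comp_apply]
      ring
    rw [h2, image_comp]
    have h3 : (fun t => c + d - t) '' Icc c d = Icc c d := by
      rw [show (fun t => c + d - t) = (fun t => (c + d) - t) from rfl, image_const_sub_Icc]
      congr 1 <;> ring
    rw [h3, img_aff h (by linarith)]
    rw [min_eq_right (by nlinarith), max_eq_left (by nlinarith)]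
    congr 1 <;> ring

lemma len_le_len {l a b c d : ℝ} (h1 : min a b ≤ min c d) (h2 : max c d ≤ max a b) :
    len l c d ≤ len l a b := by
  have h3 := max_le_max (le_refl (0:ℝ)) h1
  have h4 := min_le_min (le_refl l) h2
  simp only [len]
  exact max_le_max (le_refl (0:ℝ)) (by linarith)

lemma mem_between {a b t : ℝ} (h0 : 0 ≤ t) (h1 : t ≤ 1) :
    min a b ≤ a + t * (b - a) ∧ a + t * (b - a) ≤ max a b := by
  rcases le_total a b with h | h
  · rw [min_eq_left h, max_eq_right h]; constructor <;> nlinarith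
  · rw [min_eq_right h, max_eq_left h]; constructor <;> nlinarith

lemma ratio_mem {α β : ℝ} (h : ¬ (α < 0 ∧ β < 0)) (hc : α < 0 ∨ β < 0) :
    0 ≤ α / (α - β) ∧ α / (α - β) ≤ 1 := by
  rcases hc with hα | hβ
  · have hβ : 0 ≤ β := not_lt.mp (fun hb => h ⟨hα, hb⟩)
    have hd : α - β < 0 := by linarith
    constructor
    · exact (le_div_iff_of_neg hd).mpr (by linarith)
    · exact (div_le_iff_of_neg hd).mpr (by linarith)
  · have hα : 0 ≤ α := not_lt.mp (fun ha => h ⟨ha, hβ⟩)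
    have hd : 0 < α - β := by linarith
    exact ⟨div_nonneg hα hd.le, by rw [div_le_one hd]; linarith⟩

lemma D_nonneg (l a b α β : ℝ) : 0 ≤ D l a b α β := by
  unfold D; split
  · exact le_refl 0
  · exact len_nonneg _ _ _

lemma D_le_len (l a b α β : ℝ) : D l a b α β ≤ len l a b := by
  unfold D; split
  · exact len_nonneg _ _ _
  · rename_i h
    have h0 : 0 ≤ (if 0 ≤ α then (0:ℝ) else α / (α - β)) ∧
        (if 0 ≤ α then (0:ℝ) else α / (α - β)) ≤ 1 := by
      split
      · norm_num
      · exact ratio_mem h (Or.inl (by linarith [not_le.mp ‹¬ 0 ≤ α›]))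
    have h1 : 0 ≤ (if 0 ≤ β then (1:ℝ) else α / (α - β)) ∧
        (if 0 ≤ β then (1:ℝ) else α / (α - β)) ≤ 1 := by
      split
      · norm_num
      · exact ratio_mem h (Or.inr (by linarith [not_le.mp ‹¬ 0 ≤ β›]))
    have m0 := mem_between (a := a) (b := b) h0.1 h0.2
    have m1 := mem_between (a := a) (b := b) h1.1 h1.2
    exact len_le_len (le_min m0.1 m1.1) (max_le m0.2 m1.2)

lemma arith1 {l c x : ℝ} (hx : x ≤ 0) (hl : 0 ≤ l) :
    len l c x = min l (max c 0) := by
  simp only [len, min_def, max_def]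
  split_ifs <;> linarith

lemma arith2 {l c x : ℝ} (hx : l ≤ x) (hl : 0 ≤ l) :
    len l c x = l - min l (max c 0) := by
  simp only [len, min_def, max_def]
  split_ifs <;> linarith

lemma max0_eq {x d : ℝ} (hd : 0 < d) (h : max 0 x = d) : x = d := by
  rcases le_total x 0 with h' | h'
  · rw [max_eq_left h'] at h; linarith
  · rwa [max_eq_right h'] at h

lemma fin1 {l a b d : ℝ} (hl : 0 ≤ l) (hd : 0 < d) (hlen : len l a b = d)
    (hmin : min a b ≤ 0) :
    min l (max a 0) - min l (max b 0) = d ∨ min l (max a 0) - min l (max b 0) = -d := by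
  rcases le_total a b with h | h
  · right
    have ha : a ≤ 0 := by rwa [min_eq_left h] at hmin
    rw [len, max_eq_right h, min_eq_left h, max_eq_left ha] at hlen
    have h2 : min l b = d := by have := max0_eq hd hlen; linarith
    have hb : 0 < b := lt_of_lt_of_le (h2 ▸ hd) (min_le_right l b)
    rw [max_eq_right ha, min_eq_right hl, max_eq_left hb.le, h2]
    ring
  · left
    have hb : b ≤ 0 := by rwa [min_eq_right h] at hmin
    rw [len, max_eq_left h, min_eq_right h, max_eq_left hb] at hlen
    have h2 : min l a = d := by have := max0_eq hd hlen; linarith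
    have ha : 0 < a := lt_of_lt_of_le (h2 ▸ hd) (min_le_right l a)
    rw [max_eq_right hb, min_eq_right hl, max_eq_left ha.le, h2]
    ring

lemma fin2 {l a b d : ℝ} (hl : 0 ≤ l) (hd : 0 < d) (hlen : len l a b = d)
    (hmax : l ≤ max a b) :
    min l (max b 0) - min l (max a 0) = d ∨ min l (max b 0) - min l (max a 0) = -d := by
  rcases le_total a b with h | h
  · left
    rw [max_eq_right h] at hmax
    rw [len, max_eq_right h, min_eq_left h, min_eq_left hmax] at hlen
    have h2 : l - max 0 a = d := max0_eq hd hlen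
    have hb : min l (max b 0) = l := min_eq_left (le_trans hmax (le_max_left _ _))
    have ha : min l (max a 0) = max 0 a := by
      rw [max_comm a 0]; exact min_eq_right (by linarith)
    rw [hb, ha]; linarith
  · right
    rw [max_eq_left h] at hmax
    rw [len, max_eq_left h, min_eq_right h, min_eq_left hmax] at hlen
    have h2 : l - max 0 b = d := max0_eq hd hlen
    have ha : min l (max a 0) = l := min_eq_left (le_trans hmax (le_max_left _ _))
    have hb : min l (max b 0) = max 0 b := by
      rw [max_comm b 0]; exact min_eq_right (by linarith)
    rw [ha, hb]; linarith

lemma D_nn {l a b α β : ℝ} (h1 : 0 ≤ α) (h2 : 0 ≤ β) : D l a b α β = len l a b := by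
  rw [D, if_neg (by push_neg; intro h; linarith), if_pos h1, if_pos h2,
    show a + 0 * (b - a) = a by ring, show a + 1 * (b - a) = b by ring]

lemma D_neg_nn {l a b α β : ℝ} (h1 : 0 ≤ α) (h2 : 0 ≤ β) (h3 : ¬ (α = 0 ∧ β = 0)) :
    D l a b (-α) (-β) = 0 := by
  rw [D]
  split_ifs with hc h4 h5 h5
  · rfl
  · exact absurd ⟨le_antisymm (by linarith) h1, le_antisymm (by linarith) h2⟩ h3
  · -- 0 ≤ -α, ¬ 0 ≤ -β : α = 0, β > 0
    have hα : α = 0 := le_antisymm (by linarith) h1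
    subst hα
    rw [show (-(0:ℝ)) / (-0 - -β) = 0 by simp]
    simp only [zero_mul, add_zero]
    exact len_self l a
  · -- ¬ 0 ≤ -α, 0 ≤ -β : α > 0, β = 0
    have hβ : β = 0 := le_antisymm (by linarith) h2
    subst hβ
    rw [show (-α) / (-α - -0) = 1 by
      rw [show -α - -(0:ℝ) = -α by ring]; exact div_self (by linarith)]
    simp only [one_mul]
    exact len_self l (a + (b - a))
  · exact absurd ⟨by linarith, by linarith⟩ hc

lemma D_pn {l a b α β : ℝ} (h1 : 0 ≤ α) (h2 : β < 0) :
    D l a b α β = len l a (a + (α / (α - β)) * (b - a)) := by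
  rw [D, if_neg (by push_neg; intro h; linarith), if_pos h1, if_neg (not_le.mpr h2),
    show a + 0 * (b - a) = a by ring]

lemma neg_ratio (α β : ℝ) : (-α) / (-α - -β) = α / (α - β) := by
  rw [show -α - -β = -(α - β) by ring, neg_div_neg_eq]

lemma D_neg_pn {l a b α β : ℝ} (h1 : 0 < α) (h2 : β < 0) :
    D l a b (-α) (-β) = len l (a + (α / (α - β)) * (b - a)) b := by
  rw [D, if_neg (by push_neg; intro h; linarith), if_neg (by linarith), if_pos (by linarith),
    neg_ratio, show a + 1 * (b - a) = b by ring]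

lemma D_np {l a b α β : ℝ} (h1 : α < 0) (h2 : 0 ≤ β) :
    D l a b α β = len l (a + (α / (α - β)) * (b - a)) b := by
  rw [D, if_neg (by push_neg; intro h; linarith), if_neg (not_le.mpr h1), if_pos h2,
    show a + 1 * (b - a) = b by ring]

lemma D_neg_np {l a b α β : ℝ} (h1 : α < 0) (h2 : 0 < β) :
    D l a b (-α) (-β) = len l a (a + (α / (α - β)) * (b - a)) := by
  rw [D, if_neg (by push_neg; intro h; linarith), if_pos (by linarith), if_neg (by linarith),
    neg_ratio, show a + 0 * (b - a) = a by ring]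

lemma tendsto_ite {c : ℕ → Prop} [DecidablePred c] {f g : ℕ → ℝ} {x : ℝ}
    (hf : Tendsto f atTop (𝓝 x)) (hg : Tendsto g atTop (𝓝 x)) :
    Tendsto (fun n => if c n then f n else g n) atTop (𝓝 x) := by
  rw [tendsto_iff_dist_tendsto_zero] at hf hg ⊢
  apply squeeze_zero (fun n => dist_nonneg) (g := fun n => dist (f n) x + dist (g n) x)
  · intro n
    by_cases h : c n <;> simp [h] <;> positivity
  · simpa using hf.add hg

lemma len_tendsto {ln cn dn : ℕ → ℝ} {l c d : ℝ} (hl : Tendsto ln atTop (𝓝 l))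
    (hc : Tendsto cn atTop (𝓝 c)) (hd : Tendsto dn atTop (𝓝 d)) :
    Tendsto (fun n => len (ln n) (cn n) (dn n)) atTop (𝓝 (len l c d)) :=
  tendsto_const_nhds.max ((hl.min (hc.max hd)).sub (tendsto_const_nhds.max (hc.min hd)))

lemma t0_tendsto {αn βn : ℕ → ℝ} {α β : ℝ} (hα : Tendsto αn atTop (𝓝 α))
    (hβ : Tendsto βn atTop (𝓝 β)) (h : ¬ (α < 0 ∧ β < 0)) (h2 : ¬ (α = 0 ∧ β = 0)) :
    Tendsto (fun n => if 0 ≤ αn n then (0:ℝ) else αn n / (αn n - βn n)) atTop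
      (𝓝 (if 0 ≤ α then (0:ℝ) else α / (α - β))) := by
  rcases lt_trichotomy α 0 with hα0 | hα0 | hα0
  · -- α < 0, so 0 ≤ β, denominator < 0
    have hβ0 : 0 ≤ β := not_lt.mp fun hb => h ⟨hα0, hb⟩
    have hd : α - β ≠ 0 := by intro hh; nlinarith
    rw [if_neg (not_le.mpr hα0)]
    apply Tendsto.congr' ((hα.eventually_lt_const hα0).mono fun n hn => by
      rw [if_neg (not_le.mpr hn)])
    exact hα.div (hα.sub hβ) hd
  · -- α = 0, β ≠ 0
    subst hα0
    have hβ0 : β ≠ 0 := fun hh => h2 ⟨rfl, hh⟩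
    rw [if_pos le_rfl]
    apply tendsto_ite (f := fun _ => (0:ℝ)) tendsto_const_nhds
    have : Tendsto (fun n => αn n / (αn n - βn n)) atTop (𝓝 (0 / (0 - β))) :=
      hα.div (hα.sub hβ) (by simpa using hβ0)
    simpa using this
  · rw [if_pos hα0.le]
    apply Tendsto.congr' ((hα.eventually_const_lt hα0).mono fun n hn => by
      rw [if_pos hn.le])
    exact tendsto_const_nhds

lemma t1_tendsto {αn βn : ℕ → ℝ} {α β : ℝ} (hα : Tendsto αn atTop (𝓝 α))
    (hβ : Tendsto βn atTop (𝓝 β)) (h : ¬ (α < 0 ∧ β < 0)) (h2 : ¬ (α = 0 ∧ β = 0)) :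
    Tendsto (fun n => if 0 ≤ βn n then (1:ℝ) else αn n / (αn n - βn n)) atTop
      (𝓝 (if 0 ≤ β then (1:ℝ) else α / (α - β))) := by
  rcases lt_trichotomy β 0 with hβ0 | hβ0 | hβ0
  · -- β < 0, so 0 ≤ α, denominator > 0
    have hα0 : 0 ≤ α := not_lt.mp fun ha => h ⟨ha, hβ0⟩
    have hd : α - β ≠ 0 := by intro hh; nlinarith
    rw [if_neg (not_le.mpr hβ0)]
    apply Tendsto.congr' ((hβ.eventually_lt_const hβ0).mono fun n hn => by
      rw [if_neg (not_le.mpr hn)])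
    exact hα.div (hα.sub hβ) hd
  · -- β = 0, α ≠ 0
    subst hβ0
    have hα0 : α ≠ 0 := fun hh => h2 ⟨hh, rfl⟩
    rw [if_pos le_rfl]
    apply tendsto_ite (f := fun _ => (1:ℝ)) tendsto_const_nhds
    have : Tendsto (fun n => αn n / (αn n - βn n)) atTop (𝓝 (α / (α - 0))) :=
      hα.div (hα.sub hβ) (by simpa using hα0)
    rw [show α / (α - 0) = 1 by rw [sub_zero]; exact div_self hα0] at this
    exact this
  · rw [if_pos hβ0.le]
    apply Tendsto.congr' ((hβ.eventually_const_lt hβ0).mono fun n hn => by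
      rw [if_pos hn.le])
    exact tendsto_const_nhds

lemma D_tendsto {ln an bn αn βn : ℕ → ℝ} {l a b α β : ℝ}
    (hl : Tendsto ln atTop (𝓝 l)) (ha : Tendsto an atTop (𝓝 a))
    (hb : Tendsto bn atTop (𝓝 b)) (hα : Tendsto αn atTop (𝓝 α))
    (hβ : Tendsto βn atTop (𝓝 β)) (hside : ¬ (α = 0 ∧ β = 0) ∨ len l a b = 0) :
    Tendsto (fun n => D (ln n) (an n) (bn n) (αn n) (βn n)) atTop (𝓝 (D l a b α β)) := by
  by_cases hnn : α < 0 ∧ β < 0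
  · -- eventually the zero branch
    have he : ∀ᶠ n in atTop, αn n < 0 ∧ βn n < 0 :=
      (hα.eventually_lt_const hnn.1).and (hβ.eventually_lt_const hnn.2)
    rw [show D l a b α β = 0 from if_pos hnn]
    apply Tendsto.congr' (he.mono fun n hn => (if_pos hn).symm) tendsto_const_nhds
  by_cases h00 : α = 0 ∧ β = 0
  · -- squeeze
    have hlen0 : len l a b = 0 := hside.resolve_left (by simpa using h00)
    have hDv : D l a b α β = 0 := by rw [h00.1, h00.2, D_nn le_rfl le_rfl, hlen0]
    rw [hDv]
    exact tendsto_of_tendsto_of_tendsto_of_le_of_le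
      (tendsto_const_nhds : Tendsto (fun _ : ℕ => (0:ℝ)) atTop (𝓝 0))
      (by simpa [hlen0] using len_tendsto hl ha hb)
      (fun n => D_nonneg _ _ _ _ _) (fun n => D_le_len _ _ _ _ _)
  · -- main region
    have hmain : Tendsto (fun n =>
        len (ln n) (an n + (if 0 ≤ αn n then (0:ℝ) else αn n / (αn n - βn n)) * (bn n - an n))
          (an n + (if 0 ≤ βn n then (1:ℝ) else αn n / (αn n - βn n)) * (bn n - an n)))
        atTop (𝓝 (len l (a + (if 0 ≤ α then (0:ℝ) else α / (α - β)) * (b - a))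
          (a + (if 0 ≤ β then (1:ℝ) else α / (α - β)) * (b - a)))) :=
      len_tendsto hl (ha.add ((t0_tendsto hα hβ hnn h00).mul (hb.sub ha)))
        (ha.add ((t1_tendsto hα hβ hnn h00).mul (hb.sub ha)))
    have hDv : D l a b α β =
        len l (a + (if 0 ≤ α then (0:ℝ) else α / (α - β)) * (b - a))
          (a + (if 0 ≤ β then (1:ℝ) else α / (α - β)) * (b - a)) := if_neg hnn
    by_cases hsg : 0 < α ∨ 0 < β
    · have he : ∀ᶠ n in atTop, ¬ (αn n < 0 ∧ βn n < 0) := by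
        rcases hsg with hs | hs
        · exact (hα.eventually_const_lt hs).mono fun n hn hc => absurd hn (not_lt.mpr hc.1.le)
        · exact (hβ.eventually_const_lt hs).mono fun n hn hc => absurd hn (not_lt.mpr hc.2.le)
      rw [hDv]
      exact Tendsto.congr' (he.mono fun n hn => (if_neg hn).symm) hmain
    · -- α ≤ 0, β ≤ 0, not both zero, not both negative: D value is 0
      push_neg at hsg
      have hval0 : D l a b α β = 0 := by
        rcases lt_or_eq_of_le hsg.1 with hα0 | hα0
        · -- α < 0, hence β = 0
          have hβ0 : β = 0 := le_antisymm hsg.2 (not_lt.mp fun hb => hnn ⟨hα0, hb⟩)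
          rw [hDv, hβ0, if_neg (not_le.mpr hα0), if_pos le_rfl,
            show α / (α - 0) = 1 by rw [sub_zero]; exact div_self (by linarith)]
          simp only [one_mul]
          exact len_self _ _
        · -- α = 0, hence β < 0
          have hβ0 : β < 0 := lt_of_le_of_ne hsg.2 fun hb => h00 ⟨hα0, hb⟩
          rw [hDv, hα0, if_pos le_rfl, if_neg (not_le.mpr hβ0),
            show (0:ℝ) / (0 - β) = 0 by simp]
          simp only [zero_mul, add_zero]
          exact len_self _ _
      rw [hval0]
      have hg := hmain
      rw [← hDv, hval0] at hg
      exact tendsto_ite (c := fun n => αn n < 0 ∧ βn n < 0) (f := fun _ => (0:ℝ))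
        tendsto_const_nhds hg

/-- unit direction vector -/
def udir (p q : Pt) : Pt := ‖q - p‖⁻¹ • (q - p)
/-- first frame coordinate of `z` -/
def crd1 (p q z : Pt) : ℝ := (z 0 - p 0) * udir p q 0 + (z 1 - p 1) * udir p q 1
/-- second frame coordinate of `z` -/
def crd2 (p q z : Pt) : ℝ := -(z 0 - p 0) * udir p q 1 + (z 1 - p 1) * udir p q 0

lemma norm_ne (p q : Pt) (h : p ≠ q) : ‖q - p‖ ≠ 0 := by
  simp [sub_eq_zero]; exact fun hh => h hh.symm

lemma udir_sq {p q : Pt} (h : p ≠ q) : udir p q 0 ^ 2 + udir p q 1 ^ 2 = 1 := by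
  have hn : q - p ≠ 0 := fun hh => h (by simpa [sub_eq_zero, eq_comm] using hh)
  have h1 : ‖‖q - p‖⁻¹ • (q - p)‖ = 1 := norm_smul_inv_norm hn
  have h2 : ‖‖q - p‖⁻¹ • (q - p)‖ ^ 2
      = (‖q - p‖⁻¹ • (q - p)) 0 ^ 2 + (‖q - p‖⁻¹ • (q - p)) 1 ^ 2 := by
    rw [EuclideanSpace.norm_eq, Real.sq_sqrt (by positivity)]
    simp [Fin.sum_univ_two, Real.norm_eq_abs, mul_pow, sq_abs]
  rw [udir, ← h2, h1]; norm_num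

/-- The fundamental frame-coordinate characterization. -/
lemma frame_iff {p q : Pt} (h : p ≠ q) (z z' : Pt) (x y t : ℝ) :
    p + x • udir p q + y • pt (-(udir p q 1)) (udir p q 0) = z + t • (z' - z) ↔
      (x = crd1 p q z + t * (crd1 p q z' - crd1 p q z) ∧
       y = crd2 p q z + t * (crd2 p q z' - crd2 p q z)) := by
  have hu := udir_sq h
  have e0 : (p + x • udir p q + y • pt (-(udir p q 1)) (udir p q 0)) 0
      = p 0 + x * udir p q 0 - y * udir p q 1 := by
    simp [pt]; ring
  have e1 : (p + x • udir p q + y • pt (-(udir p q 1)) (udir p q 0)) 1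
      = p 1 + x * udir p q 1 + y * udir p q 0 := by
    simp [pt]; try ring
  have f0 : (z + t • (z' - z)) 0 = z 0 + t * (z' 0 - z 0) := by simp
  have f1 : (z + t • (z' - z)) 1 = z 1 + t * (z' 1 - z 1) := by simp
  constructor
  · intro hh
    have h0 := congrFun (congrArg WithLp.ofLp hh) 0
    have h1 := congrFun (congrArg WithLp.ofLp hh) 1
    rw [e0, f0] at h0
    rw [e1, f1] at h1
    constructor
    · simp only [crd1]
      linear_combination udir p q 0 * h0 + udir p q 1 * h1 - x * hu
    · simp only [crd2]
      linear_combination (-(udir p q 1)) * h0 + udir p q 0 * h1 - y * hu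
  · rintro ⟨rfl, rfl⟩
    ext i
    fin_cases i
    · show (p + _ • udir p q + _ • pt _ _) 0 = (z + t • (z' - z)) 0
      rw [e0, f0]
      simp only [crd1, crd2]
      linear_combination ((z 0 - p 0) + t * (z' 0 - z 0)) * hu
    · show (p + _ • udir p q + _ • pt _ _) 1 = (z + t • (z' - z)) 1
      rw [e1, f1]
      simp only [crd1, crd2]
      linear_combination ((z 1 - p 1) + t * (z' 1 - z 1)) * hu

/-- volume of the parametrized set, real-level. -/
lemma volauxP {l a b α β : ℝ} :
    (volume (Icc 0 l ∩
      {x : ℝ | ∃ t ∈ Icc (0:ℝ) 1, 0 ≤ α + t * (β - α) ∧ x = a + t * (b - a)})).toReal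
      = D l a b α β := by
  rcases le_or_gt 0 α with hα | hα <;> rcases le_or_gt 0 β with hβ | hβ
  · -- both nonneg : full interval
    have hset : {x : ℝ | ∃ t ∈ Icc (0:ℝ) 1, 0 ≤ α + t * (β - α) ∧ x = a + t * (b - a)}
        = (fun t => a + t * (b - a)) '' Icc (0:ℝ) 1 := by
      ext x
      simp only [mem_setOf_eq, mem_image, mem_Icc]
      constructor
      · rintro ⟨t, ht, _, rfl⟩; exact ⟨t, ht, rfl⟩
      · rintro ⟨t, ht, rfl⟩; exact ⟨t, ht, by nlinarith [ht.1, ht.2], rfl⟩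
    rw [hset, img_aff' a (b - a) zero_le_one,
      show a + 0 * (b - a) = a by ring, show a + 1 * (b - a) = b by ring, vol_len,
      D_nn hα hβ]
  · -- α ≥ 0 > β : Icc 0 t*
    have hd : 0 < α - β := by linarith
    have hrat := ratio_mem (α := α) (β := β) (fun hc => absurd hα (not_le.mpr hc.1)) (Or.inr hβ)
    have hset : {x : ℝ | ∃ t ∈ Icc (0:ℝ) 1, 0 ≤ α + t * (β - α) ∧ x = a + t * (b - a)}
        = (fun t => a + t * (b - a)) '' Icc (0:ℝ) (α / (α - β)) := by
      ext x
      simp only [mem_setOf_eq, mem_image, mem_Icc]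
      constructor
      · rintro ⟨t, ht, hyt, rfl⟩
        exact ⟨t, ⟨ht.1, (le_div_iff₀ hd).mpr (by nlinarith)⟩, rfl⟩
      · rintro ⟨t, ht, rfl⟩
        have h2 := (le_div_iff₀ hd).mp ht.2
        exact ⟨t, ⟨ht.1, le_trans ht.2 hrat.2⟩, by nlinarith, rfl⟩
    rw [hset, img_aff' a (b - a) hrat.1,
      show a + 0 * (b - a) = a by ring, vol_len, D_pn hα hβ]
  · -- α < 0 ≤ β : Icc t* 1
    have hd : α - β < 0 := by linarith
    have hrat := ratio_mem (α := α) (β := β) (fun hc => absurd hβ (not_le.mpr hc.2)) (Or.inl hα)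
    have hset : {x : ℝ | ∃ t ∈ Icc (0:ℝ) 1, 0 ≤ α + t * (β - α) ∧ x = a + t * (b - a)}
        = (fun t => a + t * (b - a)) '' Icc (α / (α - β)) 1 := by
      ext x
      simp only [mem_setOf_eq, mem_image, mem_Icc]
      constructor
      · rintro ⟨t, ht, hyt, rfl⟩
        exact ⟨t, ⟨(div_le_iff_of_neg hd).mpr (by nlinarith), ht.2⟩, rfl⟩
      · rintro ⟨t, ht, rfl⟩
        have h2 := (div_le_iff_of_neg hd).mp ht.1
        exact ⟨t, ⟨le_trans hrat.1 ht.1, ht.2⟩, by nlinarith, rfl⟩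
    rw [hset, img_aff' a (b - a) hrat.2,
      show a + 1 * (b - a) = b by ring, vol_len, D_np hα hβ]
  · -- both negative : empty
    have hset : {x : ℝ | ∃ t ∈ Icc (0:ℝ) 1, 0 ≤ α + t * (β - α) ∧ x = a + t * (b - a)}
        = (∅ : Set ℝ) := by
      ext x
      simp only [mem_setOf_eq, mem_empty_iff_false, iff_false, not_exists]
      intro t hcon
      obtain ⟨⟨ht0, ht1⟩, hyt, -⟩ := hcon
      rcases eq_or_lt_of_le ht1 with h1 | h1
      · rw [h1] at hyt; nlinarith
      · nlinarith [mul_pos (by linarith : (0:ℝ) < 1 - t) (by linarith : (0:ℝ) < -α),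
          mul_nonneg ht0 (by linarith : (0:ℝ) ≤ -β)]
    rw [hset, inter_empty, show D l a b α β = 0 from if_pos ⟨hα, hβ⟩]
    simp

/-- master formulas -/
lemma dplus_eq {p q : Pt} (r s : Pt) (hpq : p ≠ q) :
    dplus p q r s
      = D (dist p q) (crd1 p q r) (crd1 p q s) (crd2 p q r) (crd2 p q s) := by
  rw [dplus, if_neg hpq]
  have hxset : {x : ℝ | x ∈ Set.Icc (0 : ℝ) (dist p q) ∧
        ∃ y : ℝ, 0 ≤ y ∧
          p + x • (‖q - p‖⁻¹ • (q - p)) +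
              y • pt (-(‖q - p‖⁻¹ • (q - p)) 1) ((‖q - p‖⁻¹ • (q - p)) 0)
            ∈ segment ℝ r s}
      = Icc 0 (dist p q) ∩ {x : ℝ | ∃ t ∈ Icc (0:ℝ) 1,
          0 ≤ crd2 p q r + t * (crd2 p q s - crd2 p q r) ∧
          x = crd1 p q r + t * (crd1 p q s - crd1 p q r)} := by
    ext x
    simp only [mem_inter_iff, mem_setOf_eq, mem_Icc]
    constructor
    · rintro ⟨hx, y, hy, hseg⟩
      rw [segment_eq_image'] at hseg
      obtain ⟨t, ht, heq⟩ := hseg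
      have := (frame_iff hpq r s x y t).mp heq.symm
      exact ⟨hx, t, ht, by rw [← this.2]; exact hy, this.1⟩
    · rintro ⟨hx, t, ht, hyt, hxt⟩
      refine ⟨hx, crd2 p q r + t * (crd2 p q s - crd2 p q r), hyt, ?_⟩
      rw [segment_eq_image']
      exact ⟨t, ht, ((frame_iff hpq r s x _ t).mpr ⟨hxt, rfl⟩).symm⟩
  rw [hxset, volauxP]

lemma dminus_eq {p q : Pt} (r s : Pt) (hpq : p ≠ q) :
    dminus p q r s
      = D (dist p q) (crd1 p q r) (crd1 p q s) (-crd2 p q r) (-crd2 p q s) := by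
  rw [dminus, if_neg hpq]
  have hxset : {x : ℝ | x ∈ Set.Icc (0 : ℝ) (dist p q) ∧
        ∃ y : ℝ, y ≤ 0 ∧
          p + x • (‖q - p‖⁻¹ • (q - p)) +
              y • pt (-(‖q - p‖⁻¹ • (q - p)) 1) ((‖q - p‖⁻¹ • (q - p)) 0)
            ∈ segment ℝ r s}
      = Icc 0 (dist p q) ∩ {x : ℝ | ∃ t ∈ Icc (0:ℝ) 1,
          0 ≤ -crd2 p q r + t * (-crd2 p q s - -crd2 p q r) ∧
          x = crd1 p q r + t * (crd1 p q s - crd1 p q r)} := by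
    ext x
    simp only [mem_inter_iff, mem_setOf_eq, mem_Icc]
    constructor
    · rintro ⟨hx, y, hy, hseg⟩
      rw [segment_eq_image'] at hseg
      obtain ⟨t, ht, heq⟩ := hseg
      have := (frame_iff hpq r s x y t).mp heq.symm
      exact ⟨hx, t, ht, by rw [show -crd2 p q r + t * (-crd2 p q s - -crd2 p q r)
        = -(crd2 p q r + t * (crd2 p q s - crd2 p q r)) by ring, ← this.2]; linarith, this.1⟩
    · rintro ⟨hx, t, ht, hyt, hxt⟩
      refine ⟨hx, crd2 p q r + t * (crd2 p q s - crd2 p q r), by nlinarith [hyt], ?_⟩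
      rw [segment_eq_image']
      exact ⟨t, ht, ((frame_iff hpq r s x _ t).mpr ⟨hxt, rfl⟩).symm⟩
  rw [hxset, volauxP]

lemma osii {x y : Pt} (hxy : x ≠ y) :
    openSegment ℝ x y ⊆ intrinsicInterior ℝ (segment ℝ x y) := by
  intro z hz
  have hspan : affineSpan ℝ (segment ℝ x y) = affineSpan ℝ ({x, y} : Set Pt) := by
    rw [← convexHull_pair, affineSpan_convexHull]
  have hzs : z ∈ segment ℝ x y := openSegment_subset_segment ℝ x y hz
  have hn2 : (0:ℝ) < ‖y - x‖ ^ 2 := by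
    have h0 : (0:ℝ) < ‖y - x‖ := norm_sub_pos_iff.mpr (Ne.symm hxy)
    positivity
  -- the coordinate function on the affine span
  set A := affineSpan ℝ (segment ℝ x y) with hA
  have hcoord : ∀ w : A, ∃ c : ℝ, (w : Pt) - x = c • (y - x) := by
    intro w
    have hw : (w : Pt) ∈ affineSpan ℝ ({x, y} : Set Pt) := by
      rw [← hspan]; exact w.2
    have hx' : x ∈ affineSpan ℝ ({x, y} : Set Pt) := left_mem_affineSpan_pair ℝ x y
    have hv : (w : Pt) -ᵥ x ∈ (affineSpan ℝ ({x, y} : Set Pt)).direction :=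
      AffineSubspace.vsub_mem_direction hw hx'
    rw [direction_affineSpan, mem_vectorSpan_pair_rev] at hv
    obtain ⟨c, hc⟩ := hv
    exact ⟨c, by simpa [vsub_eq_sub] using hc.symm⟩
  set g : A → ℝ := fun w => inner ℝ ((w : Pt) - x) (y - x) with hg
  have hgc : Continuous g := by
    apply Continuous.inner
    · exact (continuous_subtype_val.sub continuous_const)
    · exact continuous_const
  -- z as element of A
  have hzA : z ∈ A := subset_affineSpan ℝ _ hzs
  refine ⟨⟨z, hzA⟩, ?_, rfl⟩
  rw [mem_interior]
  refine ⟨g ⁻¹' Ioo 0 (‖y - x‖ ^ 2), ?_, hgc.isOpen_preimage _ isOpen_Ioo, ?_⟩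
  · -- the preimage is inside the segment
    intro w hw
    obtain ⟨c, hc⟩ := hcoord w
    have hgw : g w = c * ‖y - x‖ ^ 2 := by
      rw [hg]; simp only; rw [hc, real_inner_smul_left, real_inner_self_eq_norm_sq]
    simp only [mem_preimage, mem_Ioo, hgw] at hw
    have hc0 : 0 < c := by nlinarith [hw.1]
    have hc1 : c < 1 := by nlinarith [hw.2]
    show (w : Pt) ∈ segment ℝ x y
    have hmem : x + c • (y - x) ∈ segment ℝ x y := by
      rw [segment_eq_image']; exact ⟨c, ⟨hc0.le, hc1.le⟩, rfl⟩
    have hww : (w : Pt) = x + c • (y - x) := by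
      rw [sub_eq_iff_eq_add'] at hc
      rw [hc]; try abel
    rw [hww]; exact hmem
  · -- z is in the preimage
    rw [openSegment_eq_image'] at hz
    obtain ⟨t, ht, hzt⟩ := hz
    have : g ⟨z, hzA⟩ = t * ‖y - x‖ ^ 2 := by
      rw [hg]; simp only
      rw [← hzt, show x + t • (y - x) - x = t • (y - x) by abel,
        real_inner_smul_left, real_inner_self_eq_norm_sq]
    simp only [mem_preimage, mem_Ioo, this]
    constructor <;> nlinarith [ht.1, ht.2]

lemma unorm {p q : Pt} (h : p ≠ q) : ‖udir p q‖ = 1 :=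
  norm_smul_inv_norm (fun hh => h (by simpa [sub_eq_zero, eq_comm] using hh))

lemma udir_ne {p q : Pt} (h : p ≠ q) : udir p q ≠ 0 := fun hh => by
  have := unorm h; rw [hh] at this; simp at this

lemma pinj {p : Pt} {u : Pt} (hu : u ≠ 0) : Function.Injective (fun x : ℝ => p + x • u) := by
  intro x x' h
  simp only [add_right_inj] at h
  have : (x - x') • u = 0 := by rw [sub_smul, h, sub_self]
  rcases smul_eq_zero.mp this with h' | h'
  · linarith [sub_eq_zero.mp (by linarith [h'] : x - x' = 0)]
  · exact absurd h' hu

lemma q_eq {p q : Pt} (h : p ≠ q) : q = p + dist p q • udir p q := by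
  rw [dist_eq_norm', udir, smul_smul,
    mul_inv_cancel₀ (norm_ne_zero_iff.mpr (sub_ne_zero.mpr (Ne.symm h))), one_smul]
  abel

lemma frame_pt (p q : Pt) (x : ℝ) :
    p + x • udir p q + (0:ℝ) • pt (-(udir p q 1)) (udir p q 0) = p + x • udir p q := by
  rw [zero_smul, add_zero]

/-- collinear point representation -/
lemma coll_pt {p q z : Pt} (h : p ≠ q) (hz : crd2 p q z = 0) :
    z = p + crd1 p q z • udir p q := by
  have := (frame_iff h z z (crd1 p q z) 0 0).mpr ⟨by ring, by rw [hz]; ring⟩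
  rw [frame_pt] at this
  simpa using this.symm

lemma seg_param (p u : Pt) {c d : ℝ} (h : c ≤ d) :
    segment ℝ (p + c • u) (p + d • u) = (fun x : ℝ => p + x • u) '' Icc c d := by
  rw [segment_eq_image']
  have hfun : ∀ θ : ℝ, (p + c • u) + θ • ((p + d • u) - (p + c • u))
      = p + (c + θ * (d - c)) • u := by
    intro θ
    have h1 : (p + d • u) - (p + c • u) = (d - c) • u := by
      rw [sub_smul]; abel
    rw [h1, smul_smul, add_smul]
    abel
  have himg : (fun θ : ℝ => (p + c • u) + θ • ((p + d • u) - (p + c • u)))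
      = (fun x : ℝ => p + x • u) ∘ (fun θ : ℝ => c + θ * (d - c)) := by
    funext θ; exact hfun θ
  rw [himg, image_comp, img_aff zero_le_one (by linarith),
    show c + 0 * (d - c) = c by ring, show c + 1 * (d - c) = d by ring]

lemma seg_param' (p u : Pt) (c d : ℝ) :
    segment ℝ (p + c • u) (p + d • u)
      = (fun x : ℝ => p + x • u) '' Icc (min c d) (max c d) := by
  rcases le_total c d with h | h
  · rw [min_eq_left h, max_eq_right h, seg_param p u h]
  · rw [min_eq_right h, max_eq_left h, segment_symm, seg_param p u h]

lemma open_param {p q : Pt} (h : p ≠ q) {x : ℝ} (hx : x ∈ Ioo 0 (dist p q)) :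
    p + x • udir p q ∈ openSegment ℝ p q := by
  have hl : 0 < dist p q := dist_pos.mpr h
  rw [openSegment_eq_image']
  refine ⟨x / dist p q, ⟨div_pos hx.1 hl, (div_lt_one hl).mpr hx.2⟩, ?_⟩
  have hqp : q - p = dist p q • udir p q := by
    nth_rewrite 1 [q_eq h]; abel
  show p + (x / dist p q) • (q - p) = p + x • udir p q
  rw [hqp, smul_smul, div_mul_cancel₀ _ hl.ne']

/-- parametrization of the intersection in the collinear case -/
lemma inter_param {p q r s : Pt} (hpq : p ≠ q)
    (hα : crd2 p q r = 0) (hβ : crd2 p q s = 0) :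
    segment ℝ p q ∩ segment ℝ r s = (fun x : ℝ => p + x • udir p q) ''
      Icc (max 0 (min (crd1 p q r) (crd1 p q s))) (min (dist p q) (max (crd1 p q r) (crd1 p q s))) := by
  have h1 : segment ℝ p q = (fun x : ℝ => p + x • udir p q) '' Icc 0 (dist p q) := by
    nth_rewrite 1 [q_eq hpq, show p = p + (0:ℝ) • udir p q by simp]
    exact seg_param p (udir p q) dist_nonneg
  have h2 : segment ℝ r s = (fun x : ℝ => p + x • udir p q) ''
      Icc (min (crd1 p q r) (crd1 p q s)) (max (crd1 p q r) (crd1 p q s)) := by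
    nth_rewrite 1 [coll_pt hpq hα, coll_pt hpq hβ]
    exact seg_param' p (udir p q) _ _
  rw [h1, h2, ← image_inter (pinj (udir_ne hpq)), Icc_inter_Icc]

lemma dist_param {p q : Pt} (h : p ≠ q) (x₁ x₂ : ℝ) :
    dist (p + x₁ • udir p q) (p + x₂ • udir p q) = |x₁ - x₂| := by
  rw [dist_eq_norm, show (p + x₁ • udir p q) - (p + x₂ • udir p q) = (x₁ - x₂) • udir p q
    by rw [sub_smul]; abel, norm_smul, unorm h]
  simp

lemma overlap_extract {p q r s : Pt} {d : ℝ} (hd : 0 < d)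
    (h : OverlapLen (segment ℝ p q) (segment ℝ r s) d) :
    p ≠ q ∧ r ≠ s ∧ crd2 p q r = 0 ∧ crd2 p q s = 0 ∧
      len (dist p q) (crd1 p q r) (crd1 p q s) = d := by
  obtain ⟨m₁, m₂, hint, hdist⟩ := h
  have hm : m₁ ≠ m₂ := by intro hh; rw [hh, dist_self] at hdist; linarith
  have hmem₁ : m₁ ∈ segment ℝ p q ∧ m₁ ∈ segment ℝ r s := by
    rw [← mem_inter_iff, hint]; exact left_mem_segment ℝ m₁ m₂
  have hmem₂ : m₂ ∈ segment ℝ p q ∧ m₂ ∈ segment ℝ r s := by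
    rw [← mem_inter_iff, hint]; exact right_mem_segment ℝ m₁ m₂
  have hpq : p ≠ q := by
    rintro rfl
    apply hm
    have e1 := hmem₁.1; have e2 := hmem₂.1
    rw [segment_same, mem_singleton_iff] at e1 e2
    rw [e1, e2]
  have hrs : r ≠ s := by
    rintro rfl
    apply hm
    have e1 := hmem₁.2; have e2 := hmem₂.2
    rw [segment_same, mem_singleton_iff] at e1 e2
    rw [e1, e2]
  -- frame parameters
  have hqp : q - p = dist p q • udir p q := by
    nth_rewrite 1 [q_eq hpq]; abel
  have key : ∀ m : Pt, m ∈ segment ℝ p q → m ∈ segment ℝ r s →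
      ∃ t x : ℝ, r + t • (s - r) = m ∧
        x = crd1 p q r + t * (crd1 p q s - crd1 p q r) ∧
        0 = crd2 p q r + t * (crd2 p q s - crd2 p q r) := by
    intro m h1 h2
    rw [segment_eq_image'] at h1 h2
    obtain ⟨e, he, hpe⟩ := h1
    obtain ⟨t, ht, hte⟩ := h2
    have hpe' : p + e • (q - p) = m := hpe
    have hte' : r + t • (s - r) = m := hte
    have heq : p + (e * dist p q) • udir p q + (0:ℝ) • pt (-(udir p q 1)) (udir p q 0)
        = r + t • (s - r) := by
      rw [frame_pt, ← smul_smul, ← hqp, hpe', hte']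
    have := (frame_iff hpq r s (e * dist p q) 0 t).mp heq
    exact ⟨t, e * dist p q, hte, this.1, this.2⟩
  obtain ⟨t₁, x₁, hm₁, hx₁, hy₁⟩ := key m₁ hmem₁.1 hmem₁.2
  obtain ⟨t₂, x₂, hm₂, hx₂, hy₂⟩ := key m₂ hmem₂.1 hmem₂.2
  have htne : t₁ ≠ t₂ := by
    intro hh; apply hm; rw [← hm₁, ← hm₂, hh]
  have hba : crd2 p q s - crd2 p q r = 0 := by
    rcases mul_eq_zero.mp (show (t₁ - t₂) * (crd2 p q s - crd2 p q r) = 0 by linear_combination hy₂ - hy₁) with hh | hh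
    · exact absurd (by linarith : t₁ = t₂) htne
    · exact hh
  have hα : crd2 p q r = 0 := by linear_combination -hy₁ - t₁ * hba
  have hβ : crd2 p q s = 0 := by linarith
  refine ⟨hpq, hrs, hα, hβ, ?_⟩
  -- now compute the length
  set a := crd1 p q r
  set b := crd1 p q s
  set c₁ := max 0 (min a b) with hc₁
  set c₂ := min (dist p q) (max a b) with hc₂
  have hip : segment ℝ m₁ m₂ = (fun x : ℝ => p + x • udir p q) '' Icc c₁ c₂ := by
    rw [← hint]; exact inter_param hpq hα hβ
  have hmm₁ : m₁ ∈ (fun x : ℝ => p + x • udir p q) '' Icc c₁ c₂ := by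
    rw [← hip]; exact left_mem_segment ℝ m₁ m₂
  have hmm₂ : m₂ ∈ (fun x : ℝ => p + x • udir p q) '' Icc c₁ c₂ := by
    rw [← hip]; exact right_mem_segment ℝ m₁ m₂
  obtain ⟨w₁, hw₁, hpw₁⟩ := hmm₁
  obtain ⟨w₂, hw₂, hpw₂⟩ := hmm₂
  have hdw : d = |w₁ - w₂| := by rw [← hdist, ← hpw₁, ← hpw₂, dist_param hpq]
  have hc12 : c₁ ≤ c₂ := le_trans hw₁.1 hw₁.2
  -- reverse inclusion : c₁, c₂ between w₁ w₂
  have hseg2 : segment ℝ m₁ m₂ = (fun x : ℝ => p + x • udir p q) ''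
      Icc (min w₁ w₂) (max w₁ w₂) := by
    rw [← hpw₁, ← hpw₂]; exact seg_param' p (udir p q) w₁ w₂
  have hz₁ : p + c₁ • udir p q ∈ segment ℝ m₁ m₂ := by
    rw [hip]; exact ⟨c₁, ⟨le_refl _, hc12⟩, rfl⟩
  have hz₂ : p + c₂ • udir p q ∈ segment ℝ m₁ m₂ := by
    rw [hip]; exact ⟨c₂, ⟨hc12, le_refl _⟩, rfl⟩
  rw [hseg2] at hz₁ hz₂
  obtain ⟨v₁, hv₁, hpv₁⟩ := hz₁
  obtain ⟨v₂, hv₂, hpv₂⟩ := hz₂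
  have hvc₁ : v₁ = c₁ := pinj (udir_ne hpq) hpv₁
  have hvc₂ : v₂ = c₂ := pinj (udir_ne hpq) hpv₂
  rw [hvc₁] at hv₁
  rw [hvc₂] at hv₂
  have habs : |w₁ - w₂| = c₂ - c₁ := by
    have h1 : |w₁ - w₂| ≤ c₂ - c₁ := by
      rw [abs_sub_le_iff]; constructor <;> linarith [hw₁.1, hw₁.2, hw₂.1, hw₂.2]
    have h2 : c₂ - c₁ ≤ |w₁ - w₂| := by
      rcases le_total w₁ w₂ with hh | hh
      · rw [abs_sub_comm, abs_of_nonneg (by linarith)]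
        rw [min_eq_left hh] at hv₁; rw [max_eq_right hh] at hv₂
        linarith [hv₁.1, hv₂.2]
      · rw [abs_of_nonneg (by linarith)]
        rw [min_eq_right hh] at hv₁; rw [max_eq_left hh] at hv₂
        linarith [hv₁.1, hv₂.2]
    linarith
  rw [habs] at hdw
  rw [len, ← hc₁, ← hc₂, ← hdw]
  exact max_eq_right (by linarith)

lemma overlap_construct {p q r s : Pt} (hpq : p ≠ q)
    (hα : crd2 p q r = 0) (hβ : crd2 p q s = 0)
    (hlen : 0 < len (dist p q) (crd1 p q r) (crd1 p q s)) :
    OverlapLen (segment ℝ p q) (segment ℝ r s)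
      (len (dist p q) (crd1 p q r) (crd1 p q s)) := by
  set a := crd1 p q r
  set b := crd1 p q s
  set c₁ := max 0 (min a b) with hc₁
  set c₂ := min (dist p q) (max a b) with hc₂
  have hval : len (dist p q) a b = max 0 (c₂ - c₁) := by rw [len]
  have hc12 : c₁ ≤ c₂ := by
    by_contra hcon
    rw [hval, max_eq_left (by linarith)] at hlen
    exact absurd hlen (lt_irrefl 0)
  refine ⟨p + c₁ • udir p q, p + c₂ • udir p q, ?_, ?_⟩
  · rw [inter_param hpq hα hβ, seg_param p (udir p q) hc12]
  · rw [dist_param hpq, abs_sub_comm, abs_of_nonneg (by linarith), hval,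
      max_eq_right (by linarith)]

lemma coll_no_overlap {p q r s : Pt} (hpq : p ≠ q)
    (hnt : ∀ z : Pt, ¬ (z ∈ intrinsicInterior ℝ (segment ℝ p q) ∧
      z ∈ intrinsicInterior ℝ (segment ℝ r s)))
    (hα : crd2 p q r = 0) (hβ : crd2 p q s = 0) :
    len (dist p q) (crd1 p q r) (crd1 p q s) = 0 := by
  by_contra h0
  have hlen : 0 < len (dist p q) (crd1 p q r) (crd1 p q s) :=
    lt_of_le_of_ne (le_max_left _ _) (Ne.symm h0)
  set a := crd1 p q r with ha
  set b := crd1 p q s with hb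
  set c₁ := max 0 (min a b) with hc₁
  set c₂ := min (dist p q) (max a b) with hc₂
  have hc12 : c₁ < c₂ := by
    by_contra hcon
    push_neg at hcon
    rw [len, ← hc₁, ← hc₂, max_eq_left (by linarith)] at hlen
    exact absurd hlen (lt_irrefl 0)
  have hab : a ≠ b := by
    intro hh
    rw [hc₁, hc₂, hh, min_self, max_self] at hc12
    have h1 : b ≤ max 0 b := le_max_right _ _
    have h2 : min (dist p q) b ≤ b := min_le_right _ _
    linarith
  have hrs : r ≠ s := fun hh => hab (by rw [ha, hb, hh])
  set x := (c₁ + c₂) / 2 with hx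
  have hx0 : 0 < x := by
    have : (0:ℝ) ≤ c₁ := le_max_left _ _
    linarith
  have hxl : x < dist p q := by
    have : c₂ ≤ dist p q := min_le_left _ _
    linarith
  have hxmin : min a b < x := by
    have : min a b ≤ c₁ := le_max_right _ _
    linarith
  have hxmax : x < max a b := by
    have : c₂ ≤ max a b := min_le_right _ _
    linarith
  set t := (x - a) / (b - a) with ht
  have htmem : 0 < t ∧ t < 1 := by
    rcases lt_or_gt_of_ne hab with hh | hh
    · rw [min_eq_left hh.le] at hxmin
      rw [max_eq_right hh.le] at hxmax
      exact ⟨div_pos (by linarith) (by linarith),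
        (div_lt_one (by linarith)).mpr (by linarith)⟩
    · rw [min_eq_right hh.le] at hxmin
      rw [max_eq_left hh.le] at hxmax
      have htt : t = (a - x) / (a - b) := by
        rw [ht, show x - a = -(a - x) by ring, show b - a = -(a - b) by ring, neg_div_neg_eq]
      rw [htt]
      exact ⟨div_pos (by linarith) (by linarith),
        (div_lt_one (by linarith)).mpr (by linarith)⟩
  have heq : p + x • udir p q + (0:ℝ) • pt (-(udir p q 1)) (udir p q 0)
      = r + t • (s - r) := by
    apply (frame_iff hpq r s x 0 t).mpr
    constructor
    · rw [← ha, ← hb, ht, div_mul_cancel₀ _ (sub_ne_zero.mpr (Ne.symm hab))]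
      ring
    · rw [hα, hβ]; ring
  rw [frame_pt] at heq
  exact hnt (p + x • udir p q) ⟨osii hpq (open_param hpq ⟨hx0, hxl⟩),
    osii hrs (by rw [openSegment_eq_image']; exact ⟨t, ⟨htmem.1, htmem.2⟩, heq.symm⟩)⟩

lemma hnt_cross {p q r s : Pt} (hpq : p ≠ q)
    (hnt : ∀ z : Pt, ¬ (z ∈ intrinsicInterior ℝ (segment ℝ p q) ∧
      z ∈ intrinsicInterior ℝ (segment ℝ r s)))
    (hne : crd2 p q r ≠ crd2 p q s)
    (ht0 : 0 < crd2 p q r / (crd2 p q r - crd2 p q s))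
    (ht1 : crd2 p q r / (crd2 p q r - crd2 p q s) < 1) :
    crd1 p q r + (crd2 p q r / (crd2 p q r - crd2 p q s)) * (crd1 p q s - crd1 p q r) ≤ 0 ∨
    dist p q ≤ crd1 p q r + (crd2 p q r / (crd2 p q r - crd2 p q s)) * (crd1 p q s - crd1 p q r) := by
  by_contra hcon
  push_neg at hcon
  obtain ⟨hX0, hXl⟩ := hcon
  set t := crd2 p q r / (crd2 p q r - crd2 p q s) with ht
  set X := crd1 p q r + t * (crd1 p q s - crd1 p q r) with hX
  have hrs : r ≠ s := fun hh => hne (by rw [hh])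
  have heq : p + X • udir p q + (0:ℝ) • pt (-(udir p q 1)) (udir p q 0)
      = r + t • (s - r) := by
    apply (frame_iff hpq r s X 0 t).mpr
    refine ⟨rfl, ?_⟩
    have hd0 : crd2 p q r - crd2 p q s ≠ 0 := sub_ne_zero.mpr hne
    rw [ht]
    field_simp
    ring
  rw [frame_pt] at heq
  exact hnt (p + X • udir p q) ⟨osii hpq (open_param hpq ⟨hX0, hXl⟩),
    osii hrs (by rw [openSegment_eq_image']; exact ⟨t, ⟨ht0, ht1⟩, heq.symm⟩)⟩

lemma comp_tendsto {wn : ℕ → Pt} {w : Pt} (hw : Tendsto wn atTop (𝓝 w)) (i : Fin 2) :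
    Tendsto (fun n => wn n i) atTop (𝓝 (w i)) :=
  ((EuclideanSpace.proj i).continuous.tendsto w).comp hw

lemma crd_tendsto {pn qn zn : ℕ → Pt} {p q z : Pt} (hpq : p ≠ q)
    (hp : Tendsto pn atTop (𝓝 p)) (hq : Tendsto qn atTop (𝓝 q))
    (hz : Tendsto zn atTop (𝓝 z)) :
    Tendsto (fun n => crd1 (pn n) (qn n) (zn n)) atTop (𝓝 (crd1 p q z)) ∧
    Tendsto (fun n => crd2 (pn n) (qn n) (zn n)) atTop (𝓝 (crd2 p q z)) := by
  have hne : ‖q - p‖ ≠ 0 :=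
    norm_ne_zero_iff.mpr (sub_ne_zero.mpr (Ne.symm hpq))
  have hinv : Tendsto (fun n => ‖qn n - pn n‖⁻¹) atTop (𝓝 (‖q - p‖⁻¹)) :=
    ((hq.sub hp).norm).inv₀ hne
  have h0 : ∀ i : Fin 2, Tendsto (fun n => udir (pn n) (qn n) i) atTop (𝓝 (udir p q i)) := by
    intro i
    have : ∀ (w w' : Pt), udir w w' i = ‖w' - w‖⁻¹ * (w' i - w i) := by
      intro w w'; simp [udir]
    simp only [this]
    exact hinv.mul ((comp_tendsto hq i).sub (comp_tendsto hp i))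
  constructor
  · simp only [crd1]
    exact (((comp_tendsto hz 0).sub (comp_tendsto hp 0)).mul (h0 0)).add
      (((comp_tendsto hz 1).sub (comp_tendsto hp 1)).mul (h0 1))
  · simp only [crd2]
    exact (((comp_tendsto hz 0).sub (comp_tendsto hp 0)).neg.mul (h0 1)).add
      (((comp_tendsto hz 1).sub (comp_tendsto hp 1)).mul (h0 0))

lemma dplus_bounds (p q r s : Pt) : 0 ≤ dplus p q r s ∧ dplus p q r s ≤ dist p q := by
  rw [dplus]
  split
  · exact ⟨le_refl 0, dist_nonneg⟩
  · refine ⟨ENNReal.toReal_nonneg, ?_⟩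
    apply ENNReal.toReal_le_of_le_ofReal dist_nonneg
    have h := measure_mono (μ := volume)
      (fun x hx => hx.1 : {x : ℝ | x ∈ Set.Icc (0 : ℝ) (dist p q) ∧
        ∃ y : ℝ, 0 ≤ y ∧
          p + x • (‖q - p‖⁻¹ • (q - p)) +
              y • pt (-(‖q - p‖⁻¹ • (q - p)) 1) ((‖q - p‖⁻¹ • (q - p)) 0)
            ∈ segment ℝ r s} ⊆ Icc 0 (dist p q))
    rwa [Real.volume_Icc, sub_zero] at h

lemma dminus_bounds (p q r s : Pt) : 0 ≤ dminus p q r s ∧ dminus p q r s ≤ dist p q := by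
  rw [dminus]
  split
  · exact ⟨le_refl 0, dist_nonneg⟩
  · refine ⟨ENNReal.toReal_nonneg, ?_⟩
    apply ENNReal.toReal_le_of_le_ofReal dist_nonneg
    have h := measure_mono (μ := volume)
      (fun x hx => hx.1 : {x : ℝ | x ∈ Set.Icc (0 : ℝ) (dist p q) ∧
        ∃ y : ℝ, y ≤ 0 ∧
          p + x • (‖q - p‖⁻¹ • (q - p)) +
              y • pt (-(‖q - p‖⁻¹ • (q - p)) 1) ((‖q - p‖⁻¹ • (q - p)) 0)
            ∈ segment ℝ r s} ⊆ Icc 0 (dist p q))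
    rwa [Real.volume_Icc, sub_zero] at h

lemma cross_limit {L A B Al Be F : ℕ → ℝ} {l a b d x ε : ℝ}
    (hL : Tendsto L atTop (𝓝 l)) (hA : Tendsto A atTop (𝓝 a)) (hB : Tendsto B atTop (𝓝 b))
    (hl0 : 0 ≤ l) (hLn : ∀ n, 0 ≤ L n) (hd : 0 < d) (hlen : len l a b = d)
    (htmem : ∀ n, 0 ≤ Al n / (Al n - Be n) ∧ Al n / (Al n - Be n) ≤ 1)
    (hdich : ∀ᶠ n in atTop, (A n + (Al n / (Al n - Be n)) * (B n - A n) ≤ 0) ∨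
      (L n ≤ A n + (Al n / (Al n - Be n)) * (B n - A n)))
    (hord : ∀ᶠ n in atTop, F n = ε *
      (len (L n) (A n) (A n + (Al n / (Al n - Be n)) * (B n - A n)) -
       len (L n) (A n + (Al n / (Al n - Be n)) * (B n - A n)) (B n)))
    (hε : ε = 1 ∨ ε = -1)
    (hx : Tendsto F atTop (𝓝 x)) : x = d ∨ x = -d := by
  set X : ℕ → ℝ := fun n => A n + (Al n / (Al n - Be n)) * (B n - A n) with hX
  have hXbet : ∀ n, min (A n) (B n) ≤ X n ∧ X n ≤ max (A n) (B n) := fun n =>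
    mem_between (htmem n).1 (htmem n).2
  have hsplit : (∃ᶠ n in atTop, X n ≤ 0) ∨ (∀ᶠ n in atTop, L n ≤ X n) := by
    by_cases hf : ∃ᶠ n in atTop, X n ≤ 0
    · exact Or.inl hf
    · rw [not_frequently] at hf
      exact Or.inr ((hf.and hdich).mono fun n hn => hn.2.resolve_left hn.1)
  rcases hsplit with hf | hf
  · -- extract subsequence with X ≤ 0
    obtain ⟨φ, hφ, hP⟩ := extraction_of_frequently_atTop hf
    have hφt : Tendsto φ atTop atTop := hφ.tendsto_atTop
    have hcomp : ∀ᶠ k in atTop, F (φ k) =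
        ε * (min (L (φ k)) (max (A (φ k)) 0) - min (L (φ k)) (max (B (φ k)) 0)) := by
      filter_upwards [hφt.eventually hord] with k hk
      rw [hk, arith1 (hP k) (hLn (φ k)), len_comm, arith1 (hP k) (hLn (φ k))]
    have hlim : Tendsto (fun k => ε * (min (L (φ k)) (max (A (φ k)) 0)
        - min (L (φ k)) (max (B (φ k)) 0))) atTop
        (𝓝 (ε * (min l (max a 0) - min l (max b 0)))) :=
      tendsto_const_nhds.mul ((((hL.comp hφt).min ((hA.comp hφt).max tendsto_const_nhds)).sub
        ((hL.comp hφt).min ((hB.comp hφt).max tendsto_const_nhds))))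
    have hxval : x = ε * (min l (max a 0) - min l (max b 0)) :=
      tendsto_nhds_unique (hx.comp hφt) (hlim.congr' (hcomp.mono fun k hk => hk.symm))
    have hminab : min a b ≤ 0 := by
      apply le_of_tendsto ((hA.comp hφt).min (hB.comp hφt))
      filter_upwards with k
      exact le_trans (hXbet (φ k)).1 (hP k)
    rcases fin1 hl0 hd hlen hminab with h | h <;> rcases hε with rfl | rfl <;>
      rw [hxval, h] <;> simp
  · -- eventually L ≤ X
    have hcomp : ∀ᶠ n in atTop, F n =
        ε * (min (L n) (max (B n) 0) - min (L n) (max (A n) 0)) := by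
      filter_upwards [hord, hf] with n h1 h2
      rw [h1, arith2 h2 (hLn n), len_comm, arith2 h2 (hLn n)]
      ring
    have hlim : Tendsto (fun n => ε * (min (L n) (max (B n) 0)
        - min (L n) (max (A n) 0))) atTop
        (𝓝 (ε * (min l (max b 0) - min l (max a 0)))) :=
      tendsto_const_nhds.mul (((hL.min (hB.max tendsto_const_nhds)).sub
        (hL.min (hA.max tendsto_const_nhds))))
    have hxval : x = ε * (min l (max b 0) - min l (max a 0)) :=
      tendsto_nhds_unique hx (hlim.congr' (hcomp.mono fun k hk => hk.symm))
    have hmaxab : l ≤ max a b := by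
      apply le_of_tendsto_of_tendsto hL (hA.max hB)
      filter_upwards [hf] with n hn
      exact le_trans hn (hXbet n).2
    rcases fin2 hl0 hd hlen hmaxab with h | h <;> rcases hε with rfl | rfl <;>
      rw [hxval, h] <;> simp

lemma case_limit (P1 Q1 P2 Q2 : ℕ → Pt) (p q r s : Pt) (d x : ℝ)
    (h₁ : Tendsto P1 atTop (𝓝 p)) (h₂ : Tendsto Q1 atTop (𝓝 q))
    (h₃ : Tendsto P2 atTop (𝓝 r)) (h₄ : Tendsto Q2 atTop (𝓝 s))
    (hnt : ∀ n : ℕ, ∀ z : Pt, ¬ (z ∈ intrinsicInterior ℝ (segment ℝ (P1 n) (Q1 n)) ∧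
      z ∈ intrinsicInterior ℝ (segment ℝ (P2 n) (Q2 n))))
    (hpq : p ≠ q) (hα : crd2 p q r = 0) (hβ : crd2 p q s = 0) (hd : 0 < d)
    (hlen : len (dist p q) (crd1 p q r) (crd1 p q s) = d)
    (hx : Tendsto (fun n => ordFn (P1 n) (Q1 n) (P2 n) (Q2 n)) atTop (𝓝 x)) :
    x = d ∨ x = -d := by
  set L : ℕ → ℝ := fun n => dist (P1 n) (Q1 n) with hLdef
  set A : ℕ → ℝ := fun n => crd1 (P1 n) (Q1 n) (P2 n) with hAdef
  set B : ℕ → ℝ := fun n => crd1 (P1 n) (Q1 n) (Q2 n) with hBdef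
  set Al : ℕ → ℝ := fun n => crd2 (P1 n) (Q1 n) (P2 n) with hAldef
  set Be : ℕ → ℝ := fun n => crd2 (P1 n) (Q1 n) (Q2 n) with hBedef
  have hL : Tendsto L atTop (𝓝 (dist p q)) := h₁.dist h₂
  have hA : Tendsto A atTop (𝓝 (crd1 p q r)) := (crd_tendsto hpq h₁ h₂ h₃).1
  have hAl : Tendsto Al atTop (𝓝 (crd2 p q r)) := (crd_tendsto hpq h₁ h₂ h₃).2
  have hB : Tendsto B atTop (𝓝 (crd1 p q s)) := (crd_tendsto hpq h₁ h₂ h₄).1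
  have hBe : Tendsto Be atTop (𝓝 (crd2 p q s)) := (crd_tendsto hpq h₁ h₂ h₄).2
  have hLn : ∀ n, 0 ≤ L n := fun n => dist_nonneg
  have hE1 : ∀ᶠ n in atTop, P1 n ≠ Q1 n :=
    (hL.eventually_const_lt (dist_pos.mpr hpq)).mono fun n hn => dist_pos.mp hn
  have hlenseq : Tendsto (fun n => len (L n) (A n) (B n)) atTop (𝓝 d) := by
    have := len_tendsto hL hA hB; rwa [hlen] at this
  have hE2 : ∀ᶠ n in atTop, 0 < len (L n) (A n) (B n) := hlenseq.eventually_const_lt hd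
  have hnot00 : ∀ᶠ n in atTop, ¬ (Al n = 0 ∧ Be n = 0) := by
    filter_upwards [hE1, hE2] with n hn h2
    intro hcon
    rw [coll_no_overlap hn (hnt n) hcon.1 hcon.2] at h2
    exact absurd h2 (lt_irrefl 0)
  have hord : ∀ᶠ n in atTop, ordFn (P1 n) (Q1 n) (P2 n) (Q2 n)
      = D (L n) (A n) (B n) (Al n) (Be n) - D (L n) (A n) (B n) (-Al n) (-Be n) := by
    filter_upwards [hE1] with n hn
    rw [ordFn, dplus_eq _ _ hn, dminus_eq _ _ hn]
  -- four sign cases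
  have hcover : ∀ n, (0 ≤ Al n ∧ 0 ≤ Be n) ∨ (Al n ≤ 0 ∧ Be n ≤ 0) ∨
      (0 < Al n ∧ Be n < 0) ∨ (Al n < 0 ∧ 0 < Be n) := by
    intro n
    rcases le_or_gt 0 (Al n) with h | h <;> rcases le_or_gt 0 (Be n) with h' | h'
    · exact Or.inl ⟨h, h'⟩
    · rcases eq_or_lt_of_le h with he | he
      · exact Or.inr (Or.inl ⟨le_of_eq he.symm, h'.le⟩)
      · exact Or.inr (Or.inr (Or.inl ⟨he, h'⟩))
    · rcases eq_or_lt_of_le h' with he | he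
      · exact Or.inr (Or.inl ⟨h.le, le_of_eq he.symm⟩)
      · exact Or.inr (Or.inr (Or.inr ⟨h, he⟩))
    · exact Or.inr (Or.inl ⟨h.le, h'.le⟩)
  have hfreq : (∃ᶠ n in atTop, 0 ≤ Al n ∧ 0 ≤ Be n) ∨
      (∃ᶠ n in atTop, Al n ≤ 0 ∧ Be n ≤ 0) ∨
      (∃ᶠ n in atTop, 0 < Al n ∧ Be n < 0) ∨
      (∃ᶠ n in atTop, Al n < 0 ∧ 0 < Be n) := by
    by_contra hcon
    simp only [not_or] at hcon
    obtain ⟨hc1, hc2, hc3, hc4⟩ := hcon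
    rw [not_frequently] at hc1 hc2 hc3 hc4
    obtain ⟨n, hn1, hn2, hn3, hn4⟩ := (hc1.and (hc2.and (hc3.and hc4))).exists
    rcases hcover n with h | h | h | h
    exacts [hn1 h, hn2 h, hn3 h, hn4 h]
  rcases hfreq with hf | hf | hf | hf
  · -- case 1 : both nonneg
    obtain ⟨φ, hφ, hP⟩ := extraction_of_frequently_atTop hf
    have hφt : Tendsto φ atTop atTop := hφ.tendsto_atTop
    have hcomp : ∀ᶠ k in atTop, ordFn (P1 (φ k)) (Q1 (φ k)) (P2 (φ k)) (Q2 (φ k))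
        = len (L (φ k)) (A (φ k)) (B (φ k)) := by
      filter_upwards [hφt.eventually hord, hφt.eventually hnot00] with k h1 h2
      rw [h1, D_nn (hP k).1 (hP k).2, D_neg_nn (hP k).1 (hP k).2 h2, sub_zero]
    left
    exact tendsto_nhds_unique (hx.comp hφt)
      ((hlenseq.comp hφt).congr' (hcomp.mono fun k hk => hk.symm))
  · -- case 2 : both nonpos
    obtain ⟨φ, hφ, hP⟩ := extraction_of_frequently_atTop hf
    have hφt : Tendsto φ atTop atTop := hφ.tendsto_atTop
    have hcomp : ∀ᶠ k in atTop, ordFn (P1 (φ k)) (Q1 (φ k)) (P2 (φ k)) (Q2 (φ k))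
        = -len (L (φ k)) (A (φ k)) (B (φ k)) := by
      filter_upwards [hφt.eventually hord, hφt.eventually hnot00] with k h1 h2
      have e1 : D (L (φ k)) (A (φ k)) (B (φ k)) (Al (φ k)) (Be (φ k)) = 0 := by
        have := D_neg_nn (α := -Al (φ k)) (β := -Be (φ k)) (l := L (φ k))
          (a := A (φ k)) (b := B (φ k)) (by linarith [(hP k).1]) (by linarith [(hP k).2])
          (by intro hcon; exact h2 ⟨by linarith [hcon.1], by linarith [hcon.2]⟩)
        simpa using this
      have e2 : D (L (φ k)) (A (φ k)) (B (φ k)) (-Al (φ k)) (-Be (φ k))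
          = len (L (φ k)) (A (φ k)) (B (φ k)) :=
        D_nn (by linarith [(hP k).1]) (by linarith [(hP k).2])
      rw [h1, e1, e2, zero_sub]
    right
    have : Tendsto (fun k => -len (L (φ k)) (A (φ k)) (B (φ k))) atTop (𝓝 (-d)) :=
      (hlenseq.comp hφt).neg
    exact tendsto_nhds_unique (hx.comp hφt)
      (this.congr' (hcomp.mono fun k hk => hk.symm))
  · -- case 3 : Al > 0 > Be
    obtain ⟨φ, hφ, hP⟩ := extraction_of_frequently_atTop hf
    have hφt : Tendsto φ atTop atTop := hφ.tendsto_atTop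
    have htmem : ∀ k, 0 ≤ Al (φ k) / (Al (φ k) - Be (φ k)) ∧
        Al (φ k) / (Al (φ k) - Be (φ k)) ≤ 1 := by
      intro k
      constructor
      · exact (div_pos (hP k).1 (by linarith [(hP k).1, (hP k).2])).le
      · rw [div_le_one (by linarith [(hP k).1, (hP k).2])]
        linarith [(hP k).2]
    have hdich : ∀ᶠ k in atTop,
        (A (φ k) + (Al (φ k) / (Al (φ k) - Be (φ k))) * (B (φ k) - A (φ k)) ≤ 0) ∨
        (L (φ k) ≤ A (φ k) + (Al (φ k) / (Al (φ k) - Be (φ k))) * (B (φ k) - A (φ k))) := by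
      filter_upwards [hφt.eventually hE1] with k hk
      exact hnt_cross hk (hnt (φ k)) (by linarith [(hP k).1, (hP k).2])
        (div_pos (hP k).1 (by linarith [(hP k).1, (hP k).2]))
        ((div_lt_one (by linarith [(hP k).1, (hP k).2])).mpr (by linarith [(hP k).2]))
    have hord' : ∀ᶠ k in atTop, ordFn (P1 (φ k)) (Q1 (φ k)) (P2 (φ k)) (Q2 (φ k))
        = 1 * (len (L (φ k)) (A (φ k))
            (A (φ k) + (Al (φ k) / (Al (φ k) - Be (φ k))) * (B (φ k) - A (φ k)))
          - len (L (φ k)) (A (φ k) + (Al (φ k) / (Al (φ k) - Be (φ k))) * (B (φ k) - A (φ k)))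
            (B (φ k))) := by
      filter_upwards [hφt.eventually hord] with k h1
      rw [h1, D_pn (hP k).1.le (hP k).2, D_neg_pn (hP k).1 (hP k).2, one_mul]
    exact cross_limit (hL.comp hφt) (hA.comp hφt) (hB.comp hφt) dist_nonneg
      (fun k => hLn (φ k)) hd hlen htmem hdich hord' (Or.inl rfl) (hx.comp hφt)
  · -- case 4 : Al < 0 < Be
    obtain ⟨φ, hφ, hP⟩ := extraction_of_frequently_atTop hf
    have hφt : Tendsto φ atTop atTop := hφ.tendsto_atTop
    have htmem : ∀ k, 0 ≤ Al (φ k) / (Al (φ k) - Be (φ k)) ∧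
        Al (φ k) / (Al (φ k) - Be (φ k)) ≤ 1 := by
      intro k
      have hden : Al (φ k) - Be (φ k) < 0 := by linarith [(hP k).1, (hP k).2]
      constructor
      · exact (div_pos_iff.mpr (Or.inr ⟨(hP k).1, hden⟩)).le
      · rw [div_le_iff_of_neg hden]
        linarith [(hP k).2]
    have hdich : ∀ᶠ k in atTop,
        (A (φ k) + (Al (φ k) / (Al (φ k) - Be (φ k))) * (B (φ k) - A (φ k)) ≤ 0) ∨
        (L (φ k) ≤ A (φ k) + (Al (φ k) / (Al (φ k) - Be (φ k))) * (B (φ k) - A (φ k))) := by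
      filter_upwards [hφt.eventually hE1] with k hk
      have hden : Al (φ k) - Be (φ k) < 0 := by linarith [(hP k).1, (hP k).2]
      exact hnt_cross hk (hnt (φ k)) (by linarith [(hP k).1, (hP k).2])
        (div_pos_iff.mpr (Or.inr ⟨(hP k).1, hden⟩))
        (by rw [div_lt_iff_of_neg hden]; linarith [(hP k).2])
    have hord' : ∀ᶠ k in atTop, ordFn (P1 (φ k)) (Q1 (φ k)) (P2 (φ k)) (Q2 (φ k))
        = (-1) * (len (L (φ k)) (A (φ k))
            (A (φ k) + (Al (φ k) / (Al (φ k) - Be (φ k))) * (B (φ k) - A (φ k)))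
          - len (L (φ k)) (A (φ k) + (Al (φ k) / (Al (φ k) - Be (φ k))) * (B (φ k) - A (φ k)))
            (B (φ k))) := by
      filter_upwards [hφt.eventually hord] with k h1
      rw [h1, D_np (hP k).1 (hP k).2.le, D_neg_np (hP k).1 (hP k).2]
      ring
    exact cross_limit (hL.comp hφt) (hA.comp hφt) (hB.comp hφt) dist_nonneg
      (fun k => hLn (φ k)) hd hlen htmem hdich hord' (Or.inr rfl) (hx.comp hφt)

end OrdAux
open OrdAux

/-- Let `e₁ⁿ` (from `p₁ n` to `q₁ n`) and `e₂ⁿ` (from `p₂ n` to `q₂ n`) be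
sequences of oriented segments converging endpoint-wise to `e₁` (from `p` to `q`) and `e₂`
(from `r` to `s`), such that for every `n` the segments `e₁ⁿ` and `e₂ⁿ` do not intersect at
a point lying in the relative interior of both.  If `e₁` and `e₂` do not overlap over a
segment of positive length, then `Ord(e₁ⁿ, e₂ⁿ) → Ord(e₁, e₂)`; and if `e₁` and `e₂`
overlap over a segment of length `d > 0`, then every accumulation point of the sequence
`Ord(e₁ⁿ, e₂ⁿ)` lies in `{d, −d}`. -/

theorem ordFn_limit (p₁ q₁ p₂ q₂ : ℕ → Pt) (p q r s : Pt)
    (h₁ : Tendsto p₁ atTop (𝓝 p)) (h₂ : Tendsto q₁ atTop (𝓝 q))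
    (h₃ : Tendsto p₂ atTop (𝓝 r)) (h₄ : Tendsto q₂ atTop (𝓝 s))
    (hnt : ∀ n : ℕ, ∀ z : Pt, ¬ (z ∈ intrinsicInterior ℝ (segment ℝ (p₁ n) (q₁ n)) ∧
      z ∈ intrinsicInterior ℝ (segment ℝ (p₂ n) (q₂ n)))) :
    ((¬ ∃ d : ℝ, 0 < d ∧ OverlapLen (segment ℝ p q) (segment ℝ r s) d) →
      Tendsto (fun n => ordFn (p₁ n) (q₁ n) (p₂ n) (q₂ n)) atTop (𝓝 (ordFn p q r s))) ∧
    (∀ d : ℝ, 0 < d → OverlapLen (segment ℝ p q) (segment ℝ r s) d →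
      ∀ x : ℝ, MapClusterPt x atTop (fun n => ordFn (p₁ n) (q₁ n) (p₂ n) (q₂ n)) →
        x = d ∨ x = -d) := by
  constructor
  · -- Part 1 : convergence when there is no positive-length overlap
    intro hno
    by_cases hpq : p = q
    · -- degenerate limit segment : both sides are 0 in the limit
      subst hpq
      have hval : ordFn p p r s = 0 := by
        rw [ordFn, dplus, dminus, if_pos rfl, if_pos rfl, sub_zero]
      rw [hval]
      refine squeeze_zero_norm (fun n => ?_) (by simpa using h₁.dist h₂)
      have hb1 := dplus_bounds (p₁ n) (q₁ n) (p₂ n) (q₂ n)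
      have hb2 := dminus_bounds (p₁ n) (q₁ n) (p₂ n) (q₂ n)
      rw [ordFn, Real.norm_eq_abs, abs_le]
      constructor <;> linarith [hb1.1, hb1.2, hb2.1, hb2.2]
    · -- nondegenerate limit segment : use the closed form and its continuity
      have hL : Tendsto (fun n => dist (p₁ n) (q₁ n)) atTop (𝓝 (dist p q)) := h₁.dist h₂
      have hA : Tendsto (fun n => crd1 (p₁ n) (q₁ n) (p₂ n)) atTop (𝓝 (crd1 p q r)) :=
        (crd_tendsto hpq h₁ h₂ h₃).1
      have hAl : Tendsto (fun n => crd2 (p₁ n) (q₁ n) (p₂ n)) atTop (𝓝 (crd2 p q r)) :=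
        (crd_tendsto hpq h₁ h₂ h₃).2
      have hB : Tendsto (fun n => crd1 (p₁ n) (q₁ n) (q₂ n)) atTop (𝓝 (crd1 p q s)) :=
        (crd_tendsto hpq h₁ h₂ h₄).1
      have hBe : Tendsto (fun n => crd2 (p₁ n) (q₁ n) (q₂ n)) atTop (𝓝 (crd2 p q s)) :=
        (crd_tendsto hpq h₁ h₂ h₄).2
      have hside : ¬ (crd2 p q r = 0 ∧ crd2 p q s = 0) ∨
          len (dist p q) (crd1 p q r) (crd1 p q s) = 0 := by
        by_cases h00 : crd2 p q r = 0 ∧ crd2 p q s = 0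
        · right
          by_contra hl0
          have hlen : 0 < len (dist p q) (crd1 p q r) (crd1 p q s) :=
            lt_of_le_of_ne (le_max_left _ _) (Ne.symm hl0)
          exact hno ⟨_, hlen, overlap_construct hpq h00.1 h00.2 hlen⟩
        · exact Or.inl h00
      have hside' : ¬ (-crd2 p q r = 0 ∧ -crd2 p q s = 0) ∨
          len (dist p q) (crd1 p q r) (crd1 p q s) = 0 :=
        hside.imp (fun h hc => h ⟨neg_eq_zero.mp hc.1, neg_eq_zero.mp hc.2⟩) id
      have hmain := (D_tendsto hL hA hB hAl hBe hside).sub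
        (D_tendsto hL hA hB hAl.neg hBe.neg hside')
      have hE1 : ∀ᶠ n in atTop, p₁ n ≠ q₁ n :=
        (hL.eventually_const_lt (dist_pos.mpr hpq)).mono fun n hn => dist_pos.mp hn
      have hord : ∀ᶠ n in atTop, ordFn (p₁ n) (q₁ n) (p₂ n) (q₂ n)
          = D (dist (p₁ n) (q₁ n)) (crd1 (p₁ n) (q₁ n) (p₂ n)) (crd1 (p₁ n) (q₁ n) (q₂ n))
              (crd2 (p₁ n) (q₁ n) (p₂ n)) (crd2 (p₁ n) (q₁ n) (q₂ n))
            - D (dist (p₁ n) (q₁ n)) (crd1 (p₁ n) (q₁ n) (p₂ n)) (crd1 (p₁ n) (q₁ n) (q₂ n))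
              (-crd2 (p₁ n) (q₁ n) (p₂ n)) (-crd2 (p₁ n) (q₁ n) (q₂ n)) := by
        filter_upwards [hE1] with n hn
        rw [ordFn, dplus_eq _ _ hn, dminus_eq _ _ hn]
      have hval : ordFn p q r s
          = D (dist p q) (crd1 p q r) (crd1 p q s) (crd2 p q r) (crd2 p q s)
            - D (dist p q) (crd1 p q r) (crd1 p q s) (-crd2 p q r) (-crd2 p q s) := by
        rw [ordFn, dplus_eq _ _ hpq, dminus_eq _ _ hpq]
      rw [hval]
      exact hmain.congr' (hord.mono fun n hn => hn.symm)
  · -- Part 2 : cluster points in the overlap case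
    intro d hd hov x hx
    obtain ⟨hpq, hrs, hα, hβ, hlen⟩ := overlap_extract hd hov
    obtain ⟨ψ, hψ, hψt⟩ := TopologicalSpace.FirstCountableTopology.tendsto_subseq hx
    exact case_limit (fun k => p₁ (ψ k)) (fun k => q₁ (ψ k)) (fun k => p₂ (ψ k))
      (fun k => q₂ (ψ k)) p q r s d x
      (h₁.comp hψ.tendsto_atTop) (h₂.comp hψ.tendsto_atTop)
      (h₃.comp hψ.tendsto_atTop) (h₄.comp hψ.tendsto_atTop)
      (fun k z => hnt (ψ k) z) hpq hα hβ hd hlen hψt
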